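/- arXiv:1710.02063 — 2 statements merged into one kernel-verified Lean document; each statement's English description precedes it below -/
import Mathlib

section
/- Let A_c = {a₁ ≺ a₂ ≺ ⋯ ≺ a_N} be a c-compatible linear order. Then for any t, the cyclically shifted order a_t ≺ a_{t+1} ≺ ⋯ ≺ a_N ≺ a₁ ≺ ⋯ ≺ a_{t−1} is also c-compatible. -/
variable {G : Type*} [Group G]

/-- `A` generates `G` as a monoid. -/
def GeneratesM (A : Set G) : Prop :=
  ∀ x : G, ∃ l : List G, (∀ a ∈ l, a ∈ A) ∧ l.prod = x

/-- `A` is closed under `G`-conjugation. -/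
def ConjClosed (A : Set G) : Prop :=
  ∀ g a : G, a ∈ A → g * a * g⁻¹ ∈ A

/-- The `A`-length of `x`: minimal number of factors from `A` needed to write `x`. -/
noncomputable def lenA (A : Set G) (x : G) : ℕ :=
  sInf {n : ℕ | ∃ l : List G, (∀ a ∈ l, a ∈ A) ∧ l.prod = x ∧ l.length = n}

/-- The `A`-prefix order. -/
def leA (A : Set G) (x y : G) : Prop :=
  lenA A x + lenA A (x⁻¹ * y) = lenA A y

/-- The set of reduced `A`-factorizations of `x`, as lists. -/
def RedA (A : Set G) (x : G) : Set (List G) :=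
  {l : List G | (∀ a ∈ l, a ∈ A) ∧ l.prod = x ∧ l.length = lenA A x}

/-- `A_c`: the generators occurring below `c`. -/
def Ac (A : Set G) (c : G) : Set G := {a : G | a ∈ A ∧ leA A a c}

/-- A single Hurwitz move on factorizations. -/
def HurwitzMove : List G → List G → Prop := fun l m =>
  ∃ (p s : List G) (a b : G),
    l = p ++ a :: b :: s ∧ m = p ++ b :: (b⁻¹ * a * b) :: s

/-- `r` is a linear order on the set `S`. -/
def IsLinearOrderOn (S : Set G) (r : G → G → Prop) : Prop :=
  (∀ a ∈ S, r a a) ∧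
  (∀ a ∈ S, ∀ b ∈ S, r a b → r b a → a = b) ∧
  (∀ a ∈ S, ∀ b ∈ S, ∀ c ∈ S, r a b → r b c → r a c) ∧
  (∀ a ∈ S, ∀ b ∈ S, r a b ∨ r b a)

/-- `r` is a `c`-compatible order: every length-2 element below `c` has a unique
rising reduced factorization. -/
def CompatibleOrder (A : Set G) (c : G) (r : G → G → Prop) : Prop :=
  ∀ g : G, leA A g c → lenA A g = 2 →
    ∃! l : List G, l ∈ RedA A g ∧ l.Chain' r

/-- Two factorizations correspond to maximal chains differing in exactly one element. -/
def ChainAdj (l m : List G) : Prop :=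
  l ≠ m ∧ ∃ (p s : List G) (a b a' b' : G),
    l = p ++ a :: b :: s ∧ m = p ++ a' :: b' :: s ∧ a * b = a' * b'

/-- Covering relation in the graded factorization poset. -/
def CoversA (A : Set G) (x y : G) : Prop := leA A x y ∧ lenA A y = lenA A x + 1

/-- `F_≺(a; g)`: upper covers of the atom `a` in `P_g` that also cover a strictly
smaller atom. -/
def Fset (A : Set G) (r : G → G → Prop) (a g : G) : Set G :=
  {h : G | CoversA A a h ∧ leA A h g ∧
    ∃ a' ∈ A, a' ≠ a ∧ r a' a ∧ CoversA A a' h}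

/-- `P_c` is well-covered with respect to `r`. -/
def WellCovered (A : Set G) (c : G) (r : G → G → Prop) : Prop :=
  ∀ a ∈ A, leA A a c →
    (Fset A r a c = ∅ ↔ ∀ b ∈ A, leA A b c → r a b)

/-- `P_c` is totally well-covered with respect to `r`. -/
def TotallyWellCovered (A : Set G) (c : G) (r : G → G → Prop) : Prop :=
  ∀ g : G, leA A g c → WellCovered A g r


/-! ### Auxiliary lemmas -/

lemma cyc_lenA_exists (A : Set G) (hgen : GeneratesM A) (x : G) :
    ∃ l : List G, (∀ a ∈ l, a ∈ A) ∧ l.prod = x ∧ l.length = lenA A x := by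
  have hne : {n : ℕ | ∃ l : List G, (∀ a ∈ l, a ∈ A) ∧ l.prod = x ∧ l.length = n}.Nonempty := by
    obtain ⟨l, hl, hp⟩ := hgen x
    exact ⟨l.length, l, hl, hp, rfl⟩
  exact Nat.sInf_mem hne

lemma cyc_lenA_le (A : Set G) (l : List G) (hl : ∀ a ∈ l, a ∈ A) :
    lenA A l.prod ≤ l.length := Nat.sInf_le ⟨l, hl, rfl, rfl⟩

lemma cyc_lenA_mul_le (A : Set G) (hgen : GeneratesM A) (x y : G) :
    lenA A (x * y) ≤ lenA A x + lenA A y := by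
  obtain ⟨l1, h1, p1, L1⟩ := cyc_lenA_exists A hgen x
  obtain ⟨l2, h2, p2, L2⟩ := cyc_lenA_exists A hgen y
  have h := cyc_lenA_le A (l1 ++ l2) (by
    intro a ha
    rcases List.mem_append.mp ha with h | h
    exacts [h1 a h, h2 a h])
  simpa [List.prod_append, p1, p2, L1, L2] using h

lemma cyc_leA_trans (A : Set G) (hgen : GeneratesM A) {a g c : G}
    (h1 : leA A a g) (h2 : leA A g c) : leA A a c := by
  unfold leA at h1 h2 ⊢
  have key : lenA A (a⁻¹ * c) ≤ lenA A (a⁻¹ * g) + lenA A (g⁻¹ * c) := by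
    have h := cyc_lenA_mul_le A hgen (a⁻¹ * g) (g⁻¹ * c)
    have he : a⁻¹ * g * (g⁻¹ * c) = a⁻¹ * c := by group
    rwa [he] at h
  have key2 : lenA A c ≤ lenA A a + lenA A (a⁻¹ * c) := by
    have h := cyc_lenA_mul_le A hgen a (a⁻¹ * c)
    have he : a * (a⁻¹ * c) = c := by group
    rwa [he] at h
  omega

lemma cyc_eq_one_of_lenA_zero (A : Set G) (hgen : GeneratesM A) {x : G}
    (h : lenA A x = 0) : x = 1 := by
  obtain ⟨l, -, hp, hL⟩ := cyc_lenA_exists A hgen x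
  rw [h, List.length_eq_zero_iff] at hL
  subst hL
  simpa using hp.symm

lemma cyc_lenA_one (A : Set G) : lenA A (1 : G) = 0 :=
  Nat.le_zero.mp (by simpa using cyc_lenA_le A ([] : List G) (by simp))

lemma cyc_pair_facts (A : Set G) (hgen : GeneratesM A) (hconj : ConjClosed A)
    {g a b : G} (hg2 : lenA A g = 2) (ha : a ∈ A) (hb : b ∈ A) (hprod : a * b = g) :
    lenA A a = 1 ∧ lenA A b = 1 ∧ leA A a g ∧ leA A b g := by
  have hla : lenA A a ≤ 1 := by simpa using cyc_lenA_le A [a] (by simpa using ha)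
  have hlb : lenA A b ≤ 1 := by simpa using cyc_lenA_le A [b] (by simpa using hb)
  have hna : lenA A a ≠ 0 := by
    intro h0
    have h1 : a = 1 := cyc_eq_one_of_lenA_zero A hgen h0
    subst h1
    rw [one_mul] at hprod
    subst hprod
    omega
  have hnb : lenA A b ≠ 0 := by
    intro h0
    have h1 : b = 1 := cyc_eq_one_of_lenA_zero A hgen h0
    subst h1
    rw [mul_one] at hprod
    subst hprod
    omega
  have ha1 : lenA A a = 1 := by omega
  have hb1 : lenA A b = 1 := by omega
  have hx : b⁻¹ * a * b ∈ A := by simpa using hconj b⁻¹ a ha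
  have hlx : lenA A (b⁻¹ * a * b) ≤ 1 := by
    simpa using cyc_lenA_le A [b⁻¹ * a * b] (by simpa using hx)
  have hnx : lenA A (b⁻¹ * a * b) ≠ 0 := by
    intro h0
    have h1 : b⁻¹ * a * b = 1 := cyc_eq_one_of_lenA_zero A hgen h0
    have h2 : a = 1 := by
      have h3 : a = b * (b⁻¹ * a * b) * b⁻¹ := by group
      rw [h1] at h3
      simpa using h3
    rw [h2, cyc_lenA_one] at ha1
    omega
  refine ⟨ha1, hb1, ?_, ?_⟩
  · unfold leA
    have he : a⁻¹ * g = b := by rw [← hprod]; group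
    rw [he, ha1, hb1, hg2]
  · unfold leA
    have he : b⁻¹ * g = b⁻¹ * a * b := by rw [← hprod]; group
    have hx1 : lenA A (b⁻¹ * a * b) = 1 := by omega
    rw [he, hb1, hx1, hg2]

lemma cyc_atoms_mem_Ac (A : Set G) (hgen : GeneratesM A) (hconj : ConjClosed A)
    {c g : G} (hgc : leA A g c) (hg2 : lenA A g = 2) {a b : G}
    (hab : [a, b] ∈ RedA A g) : a ∈ Ac A c ∧ b ∈ Ac A c := by
  simp only [RedA, Set.mem_setOf_eq] at hab
  obtain ⟨hmem, hprod, -⟩ := hab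
  have ha : a ∈ A := hmem a (by simp)
  have hb : b ∈ A := hmem b (by simp)
  have hprod' : a * b = g := by simpa using hprod
  obtain ⟨-, -, hag, hbg⟩ := cyc_pair_facts A hgen hconj hg2 ha hb hprod'
  exact ⟨⟨ha, cyc_leA_trans A hgen hag hgc⟩, ⟨hb, cyc_leA_trans A hgen hbg hgc⟩⟩

lemma cyc_redA_rot (A : Set G) (hconj : ConjClosed A) {g a b : G}
    (h : [a, b] ∈ RedA A g) : [b, b⁻¹ * a * b] ∈ RedA A g := by
  simp only [RedA, Set.mem_setOf_eq] at h ⊢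
  obtain ⟨hmem, hprod, hlen⟩ := h
  have ha : a ∈ A := hmem a (by simp)
  have hb : b ∈ A := hmem b (by simp)
  refine ⟨?_, ?_, by simpa using hlen⟩
  · intro x hx
    simp only [List.mem_cons, List.not_mem_nil, or_false] at hx
    rcases hx with rfl | rfl
    · exact hb
    · simpa using hconj b⁻¹ a ha
  · simp only [List.prod_cons, List.prod_nil, mul_one] at hprod ⊢
    rw [← hprod]; group

lemma cyc_redA_rot' (A : Set G) (hconj : ConjClosed A) {g a b : G}
    (h : [a, b] ∈ RedA A g) : [a * b * a⁻¹, a] ∈ RedA A g := by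
  simp only [RedA, Set.mem_setOf_eq] at h ⊢
  obtain ⟨hmem, hprod, hlen⟩ := h
  have ha : a ∈ A := hmem a (by simp)
  have hb : b ∈ A := hmem b (by simp)
  refine ⟨?_, ?_, by simpa using hlen⟩
  · intro x hx
    simp only [List.mem_cons, List.not_mem_nil, or_false] at hx
    rcases hx with rfl | rfl
    · exact hconj a b hb
    · exact ha
  · simp only [List.prod_cons, List.prod_nil, mul_one] at hprod ⊢
    rw [← hprod]; group

lemma cyc_val_cast {N : ℕ} [NeZero N] (x : ZMod N) : ((x.val : ℕ) : ZMod N) = x :=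
  ZMod.natCast_rightInverse x

lemma cyc_val_inj {N : ℕ} [NeZero N] {x y : ZMod N} (h : x.val = y.val) : x = y := by
  rw [← cyc_val_cast x, ← cyc_val_cast y, h]

lemma cyc_sub_one_val {N : ℕ} [NeZero N] {u : ZMod N} (h : u ≠ 0) :
    (u - 1).val = u.val - 1 := by
  have h1 : 1 ≤ u.val := Nat.one_le_iff_ne_zero.mpr (fun hv => h ((ZMod.val_eq_zero u).mp hv))
  have h2 : u.val - 1 < N := lt_of_le_of_lt (Nat.sub_le _ _) (ZMod.val_lt u)
  have h3 : ((u.val - 1 : ℕ) : ZMod N) = u - 1 := by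
    rw [Nat.cast_sub h1, cyc_val_cast, Nat.cast_one]
  rw [← h3, ZMod.val_cast_of_lt h2]

lemma cyc_neg_one_val {N : ℕ} [NeZero N] : (-1 : ZMod N).val = N - 1 := by
  have h1 : 1 ≤ N := Nat.one_le_iff_ne_zero.mpr (NeZero.ne N)
  have h3 : ((N - 1 : ℕ) : ZMod N) = -1 := by
    rw [Nat.cast_sub h1, ZMod.natCast_self, Nat.cast_one, zero_sub]
  rw [← h3, ZMod.val_cast_of_lt (by omega)]

lemma cyc_zmod_step {N : ℕ} [NeZero N] {x y s : ZMod N} (hx : x ≠ s) (hy : y ≠ s) :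
    ((x - (s + 1)).val ≤ (y - (s + 1)).val ↔ (x - s).val ≤ (y - s).val) := by
  have hx0 : x - s ≠ 0 := sub_ne_zero.mpr hx
  have hy0 : y - s ≠ 0 := sub_ne_zero.mpr hy
  have ex : x - (s + 1) = (x - s) - 1 := by ring
  have ey : y - (s + 1) = (y - s) - 1 := by ring
  have h1 : 1 ≤ (x - s).val :=
    Nat.one_le_iff_ne_zero.mpr (fun hv => hx0 ((ZMod.val_eq_zero _).mp hv))
  have h2 : 1 ≤ (y - s).val :=
    Nat.one_le_iff_ne_zero.mpr (fun hv => hy0 ((ZMod.val_eq_zero _).mp hv))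
  rw [ex, ey, cyc_sub_one_val hx0, cyc_sub_one_val hy0]
  omega

theorem compatible_cyclic_shift (A : Set G) (hgen : GeneratesM A)
    (hconj : ConjClosed A) (c : G) (hfin : (RedA A c).Finite)
    (N : ℕ) (e : Fin N → G) (he : Function.Injective e)
    (hrange : Set.range e = Ac A c)
    (hlin : IsLinearOrderOn (Ac A c)
      (fun x y => ∃ i j : Fin N, x = e i ∧ y = e j ∧ i.val ≤ j.val))
    (hcomp : CompatibleOrder A c
      (fun x y => ∃ i j : Fin N, x = e i ∧ y = e j ∧ i.val ≤ j.val))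
    (t : Fin N) :
    CompatibleOrder A c
      (fun x y => ∃ i j : Fin N, x = e i ∧ y = e j ∧
        (i.val + N - t.val) % N ≤ (j.val + N - t.val) % N) := by
  classical
  haveI : NeZero N := ⟨(Fin.pos t).ne'⟩
  intro g hgc hg2
  -- index-level facts about reduced pairs
  have hfst : ∀ {i j j' : Fin N}, [e i, e j] ∈ RedA A g → [e i, e j'] ∈ RedA A g → j = j' := by
    intro i j j' h1 h2
    simp only [RedA, Set.mem_setOf_eq] at h1 h2
    have p1 : e i * e j = g := by simpa using h1.2.1
    have p2 : e i * e j' = g := by simpa using h2.2.1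
    exact he (mul_left_cancel (p1.trans p2.symm))
  have hsnd : ∀ {i i' j : Fin N}, [e i, e j] ∈ RedA A g → [e i', e j] ∈ RedA A g → i = i' := by
    intro i i' j h1 h2
    simp only [RedA, Set.mem_setOf_eq] at h1 h2
    have p1 : e i * e j = g := by simpa using h1.2.1
    have p2 : e i' * e j = g := by simpa using h2.2.1
    exact he (mul_right_cancel (p1.trans p2.symm))
  have hidx : ∀ {x : G}, x ∈ Ac A c → ∃ i, e i = x := by
    intro x hx
    have hx' : x ∈ Set.range e := by rw [hrange]; exact hx
    exact hx'
  have hnext : ∀ {i j : Fin N}, [e i, e j] ∈ RedA A g → ∃ k, [e j, e k] ∈ RedA A g := by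
    intro i j h
    have h2 := cyc_redA_rot A hconj h
    obtain ⟨-, hmem⟩ := cyc_atoms_mem_Ac A hgen hconj hgc hg2 h2
    obtain ⟨k, hk⟩ := hidx hmem
    exact ⟨k, by rwa [hk]⟩
  have hprev : ∀ {i j : Fin N}, [e i, e j] ∈ RedA A g → ∃ k, [e k, e i] ∈ RedA A g := by
    intro i j h
    have h2 := cyc_redA_rot' A hconj h
    obtain ⟨hmem, -⟩ := cyc_atoms_mem_Ac A hgen hconj hgc hg2 h2
    obtain ⟨k, hk⟩ := hidx hmem
    exact ⟨k, by rwa [hk]⟩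
  -- the step: uniqueness of the rising pair is preserved by a unit shift
  have hQstep : ∀ s : ZMod N,
      (∃! p : Fin N × Fin N, [e p.1, e p.2] ∈ RedA A g ∧
        ((p.1.val : ZMod N) - s).val ≤ ((p.2.val : ZMod N) - s).val) →
      (∃! p : Fin N × Fin N, [e p.1, e p.2] ∈ RedA A g ∧
        ((p.1.val : ZMod N) - (s + 1)).val ≤ ((p.2.val : ZMod N) - (s + 1)).val) := by
    intro s hQ
    obtain ⟨σ, hcastσ⟩ : ∃ σ : Fin N, ((σ.val : ℕ) : ZMod N) = s :=
      ⟨⟨s.val, ZMod.val_lt s⟩, cyc_val_cast s⟩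
    have hcast_inj : ∀ i : Fin N, ((i.val : ℕ) : ZMod N) = s → i = σ := by
      intro i hi
      have h2 := congrArg ZMod.val (hi.trans hcastσ.symm)
      rw [ZMod.val_cast_of_lt i.isLt, ZMod.val_cast_of_lt σ.isLt] at h2
      exact Fin.ext h2
    by_cases hB : ∃ j, [e σ, e j] ∈ RedA A g ∧ j ≠ σ
    · obtain ⟨j₀, hj₀, hj₀ne⟩ := hB
      have hordσ : ((σ.val : ZMod N) - s).val ≤ ((j₀.val : ZMod N) - s).val := by
        rw [hcastσ, sub_self]
        simp
      obtain ⟨p, hp, hpu⟩ := hQ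
      have hpe : (σ, j₀) = p := hpu (σ, j₀) ⟨hj₀, hordσ⟩
      obtain ⟨i₀, hi₀⟩ := hprev hj₀
      refine ⟨(i₀, σ), ⟨hi₀, ?_⟩, ?_⟩
      · have hσ1 : ((σ.val : ZMod N)) - (s + 1) = -1 := by rw [hcastσ]; ring
        show ((i₀.val : ZMod N) - (s + 1)).val ≤ ((σ.val : ZMod N) - (s + 1)).val
        rw [hσ1, cyc_neg_one_val]
        have hlt := ZMod.val_lt ((i₀.val : ZMod N) - (s + 1))
        omega
      · rintro ⟨i, j⟩ ⟨hR, hord⟩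
        have hord' : ((i.val : ZMod N) - (s + 1)).val ≤ ((j.val : ZMod N) - (s + 1)).val := hord
        clear hord
        by_cases hjσ : j = σ
        · subst hjσ
          have hii : i = i₀ := hsnd hR hi₀
          rw [hii]
        · have hcastj : ((j.val : ℕ) : ZMod N) ≠ s := fun h => hjσ (hcast_inj j h)
          by_cases hiσ : i = σ
          · exfalso
            subst hiσ
            have hσ1 : ((i.val : ZMod N)) - (s + 1) = -1 := by rw [hcastσ]; ring
            rw [hσ1, cyc_neg_one_val] at hord'
            have hlt := ZMod.val_lt ((j.val : ZMod N) - (s + 1))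
            have heq : ((j.val : ZMod N) - (s + 1)).val = N - 1 := by omega
            have h5 : ((j.val : ZMod N) - (s + 1)) = -1 := by
              apply cyc_val_inj
              rw [heq, cyc_neg_one_val]
            have h6 : ((j.val : ℕ) : ZMod N) = s := by linear_combination h5
            exact hcastj h6
          · have hcasti : ((i.val : ℕ) : ZMod N) ≠ s := fun h => hiσ (hcast_inj i h)
            have hords : ((i.val : ZMod N) - s).val ≤ ((j.val : ZMod N) - s).val :=
              (cyc_zmod_step hcasti hcastj).mp hord'
            have h6 : ((i, j) : Fin N × Fin N) = p := hpu (i, j) ⟨hR, hords⟩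
            exact absurd (congrArg Prod.fst (h6.trans hpe.symm)) hiσ
    · push_neg at hB
      have hiff : ∀ i j : Fin N, [e i, e j] ∈ RedA A g →
          ((((i.val : ZMod N) - (s + 1)).val ≤ ((j.val : ZMod N) - (s + 1)).val) ↔
            (((i.val : ZMod N) - s).val ≤ ((j.val : ZMod N) - s).val)) := by
        intro i j hR
        by_cases hiσ : i = σ
        · subst hiσ
          have hj : j = i := hB j hR
          subst hj
          simp
        · by_cases hjσ : j = σ
          · exfalso
            subst hjσ
            obtain ⟨k, hk⟩ := hnext hR
            have hkσ : k = j := hB k hk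
            subst hkσ
            exact hiσ (hsnd hR hk)
          · exact cyc_zmod_step (fun h => hiσ (hcast_inj i h)) (fun h => hjσ (hcast_inj j h))
      obtain ⟨p, hp, hpu⟩ := hQ
      exact ⟨p, ⟨hp.1, (hiff p.1 p.2 hp.1).mpr hp.2⟩,
        fun q hq => hpu q ⟨hq.1, (hiff q.1 q.2 hq.1).mp hq.2⟩⟩
  -- the base case from the given compatible order
  have hQ0 : ∃! p : Fin N × Fin N, [e p.1, e p.2] ∈ RedA A g ∧
      ((p.1.val : ZMod N) - (0 : ZMod N)).val ≤ ((p.2.val : ZMod N) - (0 : ZMod N)).val := by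
    obtain ⟨l0, ⟨hl0R, hl0C⟩, hl0U⟩ := hcomp g hgc hg2
    have hord0 : ∀ i : Fin N, ((i.val : ZMod N) - (0 : ZMod N)).val = i.val := by
      intro i
      rw [sub_zero, ZMod.val_cast_of_lt i.isLt]
    have hl0R' : (∀ a ∈ l0, a ∈ A) ∧ l0.prod = g ∧ l0.length = lenA A g := hl0R
    have hlen : l0.length = 2 := by rw [hl0R'.2.2, hg2]
    obtain ⟨a, b, rfl⟩ := List.length_eq_two.mp hlen
    obtain ⟨hamem, hbmem⟩ := cyc_atoms_mem_Ac A hgen hconj hgc hg2 hl0R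
    obtain ⟨i, hi⟩ := hidx hamem
    obtain ⟨j, hj⟩ := hidx hbmem
    have hC := List.isChain_pair.mp hl0C
    obtain ⟨i', j', hai, hbj, hle⟩ := hC
    have hii : i' = i := he (by rw [hi, ← hai])
    have hjj : j' = j := he (by rw [hj, ← hbj])
    refine ⟨(i, j), ⟨by rw [hi, hj]; exact hl0R, ?_⟩, ?_⟩
    · show ((i.val : ZMod N) - (0 : ZMod N)).val ≤ ((j.val : ZMod N) - (0 : ZMod N)).val
      rw [hord0, hord0]
      rw [hii, hjj] at hle
      exact hle
    · rintro ⟨i'', j''⟩ ⟨hR, hO⟩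
      rw [hord0, hord0] at hO
      have hchain : List.Chain' (fun x y => ∃ i j : Fin N, x = e i ∧ y = e j ∧ i.val ≤ j.val)
          [e i'', e j''] := List.isChain_pair.mpr ⟨i'', j'', rfl, rfl, hO⟩
      have heq := hl0U [e i'', e j''] ⟨hR, hchain⟩
      simp only [List.cons.injEq, and_true] at heq
      obtain ⟨h1, h2⟩ := heq
      have : i'' = i := he (by rw [h1, ← hi])
      have h3 : j'' = j := he (by rw [h2, ← hj])
      rw [this, h3]
  -- induct along the cycle
  have hQn : ∀ n : ℕ, ∃! p : Fin N × Fin N, [e p.1, e p.2] ∈ RedA A g ∧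
      ((p.1.val : ZMod N) - ((n : ℕ) : ZMod N)).val ≤ ((p.2.val : ZMod N) - ((n : ℕ) : ZMod N)).val := by
    intro n
    induction n with
    | zero => simpa using hQ0
    | succ m ih =>
        have h := hQstep ((m : ℕ) : ZMod N) ih
        have hc : (((m + 1 : ℕ)) : ZMod N) = ((m : ℕ) : ZMod N) + 1 := by push_cast; ring
        rw [hc]
        exact h
  have hQt := hQn t.val
  -- translate the shifted comparison
  have hshift : ∀ i : Fin N, ((i.val : ZMod N) - ((t.val : ℕ) : ZMod N)).val
      = (i.val + N - t.val) % N := by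
    intro i
    have htle : t.val ≤ N := le_of_lt t.isLt
    have h1 : ((i.val + (N - t.val) : ℕ) : ZMod N)
        = (i.val : ZMod N) - ((t.val : ℕ) : ZMod N) := by
      rw [Nat.cast_add, Nat.cast_sub htle, ZMod.natCast_self]
      ring
    rw [← h1, ZMod.val_natCast]
    congr 1
    omega
  obtain ⟨p, ⟨hpR, hpO⟩, hpu⟩ := hQt
  refine ⟨[e p.1, e p.2], ⟨hpR, List.isChain_pair.mpr ⟨p.1, p.2, rfl, rfl, ?_⟩⟩, ?_⟩
  · rw [← hshift p.1, ← hshift p.2]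
    exact hpO
  · rintro l ⟨hlR, hlC⟩
    have hlR' : (∀ a ∈ l, a ∈ A) ∧ l.prod = g ∧ l.length = lenA A g := hlR
    have hlen : l.length = 2 := by rw [hlR'.2.2, hg2]
    obtain ⟨a, b, rfl⟩ := List.length_eq_two.mp hlen
    have hC := List.isChain_pair.mp hlC
    obtain ⟨i, j, rfl, rfl, hij⟩ := hC
    have h7 : ((i, j) : Fin N × Fin N) = p := by
      apply hpu
      refine ⟨hlR, ?_⟩
      show ((i.val : ZMod N) - ((t.val : ℕ) : ZMod N)).val
          ≤ ((j.val : ZMod N) - ((t.val : ℕ) : ZMod N)).val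
      rw [hshift i, hshift j]
      exact hij
    rw [← h7]
end

section
/- Let ≺ be a c-compatible order on A_c, and suppose the factorization poset P_c is totally well-covered with respect to ≺. Then for every x ≤_A y ≤_A c there exists a unique ≺-rising reduced A-factorization of x⁻¹y. -/
variable {G : Type*} [Group G]

section BasicLemmas

variable {A : Set G}

lemma lenA_le_length {l : List G} {x : G} (hl : ∀ a ∈ l, a ∈ A) (hx : l.prod = x) :
    lenA A x ≤ l.length :=
  Nat.sInf_le ⟨l, hl, hx, rfl⟩

lemma exists_red (hgen : GeneratesM A) (x : G) : ∃ l, l ∈ RedA A x := by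
  have hne : {n : ℕ | ∃ l : List G, (∀ a ∈ l, a ∈ A) ∧ l.prod = x ∧ l.length = n}.Nonempty := by
    obtain ⟨l, h1, h2⟩ := hgen x
    exact ⟨l.length, l, h1, h2, rfl⟩
  obtain ⟨l, h1, h2, h3⟩ := Nat.sInf_mem hne
  exact ⟨l, h1, h2, h3⟩

lemma lenA_one : lenA A (1 : G) = 0 :=
  Nat.le_zero.mp (lenA_le_length (l := ([] : List G)) (by simp) (by simp))

lemma eq_one_of_lenA_zero (hgen : GeneratesM A) {x : G} (h : lenA A x = 0) : x = 1 := by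
  obtain ⟨l, _, h2, h3⟩ := exists_red hgen x
  rw [h] at h3
  rw [List.length_eq_zero_iff.mp h3] at h2
  simpa using h2.symm

lemma mem_of_lenA_one (hgen : GeneratesM A) {x : G} (h : lenA A x = 1) : x ∈ A := by
  obtain ⟨l, h1, h2, h3⟩ := exists_red hgen x
  rw [h] at h3
  obtain ⟨a, rfl⟩ := List.length_eq_one_iff.mp h3
  simp at h2
  exact h2 ▸ h1 a (by simp)

lemma lenA_atom (hgen : GeneratesM A) (h1 : (1 : G) ∉ A) {a : G} (ha : a ∈ A) :
    lenA A a = 1 := by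
  have hle : lenA A a ≤ 1 := lenA_le_length (l := [a]) (by simpa) (by simp)
  have hne : lenA A a ≠ 0 := fun h => h1 (eq_one_of_lenA_zero hgen h ▸ ha)
  omega

lemma lenA_mul_le (hgen : GeneratesM A) (x y : G) :
    lenA A (x * y) ≤ lenA A x + lenA A y := by
  obtain ⟨lx, hx1, hx2, hx3⟩ := exists_red hgen x
  obtain ⟨ly, hy1, hy2, hy3⟩ := exists_red hgen y
  have := lenA_le_length (l := lx ++ ly) (x := x * y)
    (by intro a ha; rcases List.mem_append.mp ha with h | h; exacts [hx1 a h, hy1 a h])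
    (by rw [List.prod_append, hx2, hy2])
  rw [List.length_append, hx3, hy3] at this
  exact this

lemma leA_refl (x : G) : leA A x x := by
  show lenA A x + lenA A (x⁻¹ * x) = lenA A x
  rw [inv_mul_cancel, lenA_one]; omega

lemma leA_one_left (x : G) : leA A 1 x := by
  show lenA A 1 + lenA A (1⁻¹ * x) = lenA A x
  rw [lenA_one, inv_one, one_mul]; omega

lemma leA_trans (hgen : GeneratesM A) {x y z : G} (h1 : leA A x y) (h2 : leA A y z) :
    leA A x z := by
  have e1 : x⁻¹ * z = (x⁻¹ * y) * (y⁻¹ * z) := by group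
  have h3 : lenA A (x⁻¹ * z) ≤ lenA A (x⁻¹ * y) + lenA A (y⁻¹ * z) := by
    rw [e1]; exact lenA_mul_le hgen _ _
  have h4 : lenA A z ≤ lenA A x + lenA A (x⁻¹ * z) := by
    have := lenA_mul_le hgen x (x⁻¹ * z)
    rwa [mul_inv_cancel_left] at this
  unfold leA at *
  omega

lemma conj_prod (u : G) (l : List G) :
    (l.map (fun a => u * a * u⁻¹)).prod = u * l.prod * u⁻¹ := by
  induction l with
  | nil => simp
  | cons a t ih => simp only [List.map_cons, List.prod_cons, ih]; group

lemma lenA_conj_le (hgen : GeneratesM A) (hconj : ConjClosed A) (u x : G) :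
    lenA A (u * x * u⁻¹) ≤ lenA A x := by
  obtain ⟨l, h1, h2, h3⟩ := exists_red hgen x
  have := lenA_le_length (l := l.map (fun a => u * a * u⁻¹)) (x := u * x * u⁻¹)
    (by intro a ha
        obtain ⟨b, hb, rfl⟩ := List.mem_map.mp ha
        exact hconj u b (h1 b hb))
    (by rw [conj_prod, h2])
  simpa [h3] using this

end BasicLemmas
section MoreLemmas

variable {A : Set G}

/-- If `x ≤ h` then the complement `x⁻¹h ≤ h`. -/
lemma leA_complement (hgen : GeneratesM A) (hconj : ConjClosed A) {x h : G}
    (hx : leA A x h) : leA A (x⁻¹ * h) h := by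
  have e : (x⁻¹ * h)⁻¹ * h = h⁻¹ * x * h := by group
  show lenA A (x⁻¹ * h) + lenA A ((x⁻¹ * h)⁻¹ * h) = lenA A h
  rw [e]
  have h1 : lenA A (h⁻¹ * x * h) ≤ lenA A x := by
    have := lenA_conj_le hgen hconj h⁻¹ x
    rwa [inv_inv] at this
  have h2 : lenA A h ≤ lenA A (x⁻¹ * h) + lenA A (h⁻¹ * x * h) := by
    have := lenA_mul_le hgen (x⁻¹ * h) (h⁻¹ * x * h)
    have e2 : (x⁻¹ * h) * (h⁻¹ * x * h) = h := by group
    rwa [e2] at this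
  unfold leA at hx
  omega

/-- Interval transport: `x ≤ h ≤ g` implies `x⁻¹h ≤ x⁻¹g`. -/
lemma leA_inner (hgen : GeneratesM A) {x h g : G}
    (hxh : leA A x h) (hhg : leA A h g) : leA A (x⁻¹ * h) (x⁻¹ * g) := by
  have hxg : leA A x g := leA_trans hgen hxh hhg
  have e : (x⁻¹ * h)⁻¹ * (x⁻¹ * g) = h⁻¹ * g := by group
  show lenA A (x⁻¹ * h) + lenA A ((x⁻¹ * h)⁻¹ * (x⁻¹ * g)) = lenA A (x⁻¹ * g)
  rw [e]
  unfold leA at hxh hhg hxg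
  omega

/-- If `x ≤ y ≤ c` then `x⁻¹y ≤ c`. -/
lemma leA_quot (hgen : GeneratesM A) (hconj : ConjClosed A) {x y c : G}
    (hxy : leA A x y) (hyc : leA A y c) : leA A (x⁻¹ * y) c := by
  have e : (x⁻¹ * y)⁻¹ * c = (y⁻¹ * x * y) * (y⁻¹ * c) := by group
  show lenA A (x⁻¹ * y) + lenA A ((x⁻¹ * y)⁻¹ * c) = lenA A c
  have h1 : lenA A ((x⁻¹ * y)⁻¹ * c) ≤ lenA A x + lenA A (y⁻¹ * c) := by
    rw [e]
    calc lenA A ((y⁻¹ * x * y) * (y⁻¹ * c)) ≤ lenA A (y⁻¹ * x * y) + lenA A (y⁻¹ * c) :=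
          lenA_mul_le hgen _ _
      _ ≤ lenA A x + lenA A (y⁻¹ * c) := by
          have := lenA_conj_le hgen hconj y⁻¹ x
          rw [inv_inv] at this
          omega
  have h2 : lenA A c ≤ lenA A (x⁻¹ * y) + lenA A ((x⁻¹ * y)⁻¹ * c) := by
    have := lenA_mul_le hgen (x⁻¹ * y) ((x⁻¹ * y)⁻¹ * c)
    rwa [mul_inv_cancel_left] at this
  unfold leA at hxy hyc
  omega

/-- Splitting a reduced word at its head. -/
lemma red_cons (hgen : GeneratesM A) {a : G} {t : List G} {g : G}
    (h : (a :: t) ∈ RedA A g) :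
    a ∈ A ∧ lenA A a = 1 ∧ leA A a g ∧ t ∈ RedA A (a⁻¹ * g) := by
  obtain ⟨hmem, hprod, hlen⟩ := h
  have ha : a ∈ A := hmem a (by simp)
  have ht : ∀ b ∈ t, b ∈ A := fun b hb => hmem b (by simp [hb])
  have hg : a * t.prod = g := by simpa using hprod
  have hpt : t.prod = a⁻¹ * g := by rw [← hg, inv_mul_cancel_left]
  have l1 : lenA A a ≤ 1 := lenA_le_length (l := [a]) (by simpa) (by simp)
  have l2 : lenA A (a⁻¹ * g) ≤ t.length := lenA_le_length ht hpt
  have l3 : lenA A g ≤ lenA A a + lenA A (a⁻¹ * g) := by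
    have := lenA_mul_le hgen a (a⁻¹ * g)
    rwa [mul_inv_cancel_left] at this
  have hlen' : t.length + 1 = lenA A g := by simpa using hlen
  have e1 : lenA A a = 1 := by omega
  have e2 : lenA A (a⁻¹ * g) = t.length := by omega
  exact ⟨ha, e1, by unfold leA; omega, ht, hpt, e2.symm⟩

/-- Building a reduced word with a given head. -/
lemma red_cons_build (hgen : GeneratesM A) (h1 : (1 : G) ∉ A) {a g : G} {t : List G}
    (ha : a ∈ A) (hag : leA A a g) (ht : t ∈ RedA A (a⁻¹ * g)) :
    (a :: t) ∈ RedA A g := by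
  obtain ⟨ht1, ht2, ht3⟩ := ht
  refine ⟨?_, ?_, ?_⟩
  · intro b hb
    rcases List.mem_cons.mp hb with rfl | hb
    · exact ha
    · exact ht1 b hb
  · rw [List.prod_cons, ht2, mul_inv_cancel_left]
  · have e1 : lenA A a = 1 := lenA_atom hgen h1 ha
    unfold leA at hag
    simp only [List.length_cons, ht3]
    omega

end MoreLemmas
section FinMin

variable {A : Set G} {c : G} {r : G → G → Prop}

lemma Ac_finite (hgen : GeneratesM A) (h1 : (1 : G) ∉ A) (hfin : (RedA A c).Finite) :
    (Ac A c).Finite := by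
  haveI : Inhabited G := ⟨1⟩
  apply (hfin.image List.headI).subset
  rintro a ⟨haA, hac⟩
  obtain ⟨t, ht⟩ := exists_red hgen (a⁻¹ * c)
  exact ⟨a :: t, red_cons_build hgen h1 haA hac ht, rfl⟩

lemma finset_rmin (hlin : IsLinearOrderOn (Ac A c) r) (s : Finset G) :
    ↑s ⊆ Ac A c → s.Nonempty → ∃ m ∈ s, ∀ b ∈ s, r m b := by
  classical
  induction s using Finset.induction_on with
  | empty => intro _ h; exact absurd h (by simp)
  | @insert a s ha ih =>
    intro hsub hne
    have haAc : a ∈ Ac A c := hsub (by simp)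
    by_cases hs : s.Nonempty
    · obtain ⟨m, hm, hmin⟩ := ih (fun x hx => hsub (by simp; right; exact_mod_cast hx)) hs
      have hmAc : m ∈ Ac A c := hsub (by simp; right; exact hm)
      rcases hlin.2.2.2 a haAc m hmAc with h | h
      · refine ⟨a, by simp, ?_⟩
        intro b hb
        rcases Finset.mem_insert.mp hb with rfl | hb
        · exact hlin.1 _ haAc
        · exact hlin.2.2.1 a haAc m hmAc b (hsub (by simp; right; exact hb)) h (hmin b hb)
      · refine ⟨m, by simp [hm], ?_⟩
        intro b hb
        rcases Finset.mem_insert.mp hb with rfl | hb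
        · exact h
        · exact hmin b hb
    · have hse : s = ∅ := Finset.not_nonempty_iff_eq_empty.mp hs
      subst hse
      refine ⟨a, by simp, ?_⟩
      intro b hb
      simp at hb
      subst hb
      exact hlin.1 _ haAc

lemma set_rmin (hlin : IsLinearOrderOn (Ac A c) r) {S : Set G} (hS : S.Finite)
    (hsub : S ⊆ Ac A c) (hne : S.Nonempty) : ∃ m ∈ S, ∀ b ∈ S, r m b := by
  obtain ⟨m, hm, hmin⟩ := finset_rmin hlin hS.toFinset
    (by rw [Set.Finite.coe_toFinset]; exact hsub)
    (by rw [← Set.Finite.toFinset_nonempty hS] at hne; exact hne)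
  rw [Set.Finite.mem_toFinset] at hm
  exact ⟨m, hm, fun b hb => hmin b (hS.mem_toFinset.mpr hb)⟩

end FinMin
section OneCase

variable {A : Set G} {c : G} {r : G → G → Prop}

lemma unique0 {g : G} (hgen : GeneratesM A) (hg : lenA A g = 0) :
    ∃! l : List G, l ∈ RedA A g ∧ l.Chain' r := by
  have hg1 : g = 1 := eq_one_of_lenA_zero hgen hg
  subst hg1
  refine ⟨[], ⟨⟨by simp, by simp, by simp [lenA_one]⟩, List.isChain_nil⟩, ?_⟩
  rintro l ⟨⟨_, _, hl⟩, _⟩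
  rw [lenA_one] at hl
  exact List.length_eq_zero_iff.mp hl

lemma no_one (hgen : GeneratesM A) (hlin : IsLinearOrderOn (Ac A c) r)
    (hwc : TotallyWellCovered A c r) (h1 : (1 : G) ∈ A) (hc : lenA A c ≠ 0) : False := by
  obtain ⟨w, hw⟩ := exists_red hgen c
  cases w with
  | nil =>
    obtain ⟨-, -, hl⟩ := hw
    simp at hl
    exact hc hl.symm
  | cons a t =>
    obtain ⟨haA, halen, hac, -⟩ := red_cons hgen hw
    have hwa := hwc a hac
    have h1a : leA A 1 a := leA_one_left a
    have hF1 : Fset A r 1 a = ∅ := by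
      ext h'
      simp only [Set.mem_empty_iff_false, iff_false]
      rintro ⟨⟨h1h, hlh⟩, -, a', ha'A, ha'ne, -, -, hlh'⟩
      rw [lenA_one] at hlh
      have : lenA A a' = 0 := by omega
      exact ha'ne (eq_one_of_lenA_zero hgen this)
    have hr1a : r 1 a := (hwa 1 h1 h1a).mp hF1 a haA (leA_refl a)
    have hFa : Fset A r a a = ∅ := by
      ext h'
      simp only [Set.mem_empty_iff_false, iff_false]
      rintro ⟨⟨hah, hlh⟩, hh'a, -⟩
      unfold leA at hh'a
      omega
    have hra1 : r a 1 := (hwa a haA (leA_refl a)).mp hFa 1 h1 h1a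
    have : a = 1 := hlin.2.1 a ⟨haA, hac⟩ 1 ⟨h1, leA_one_left c⟩ hra1 hr1a
    rw [this, lenA_one] at halen
    exact one_ne_zero halen.symm
end OneCase
lemma master (A : Set G) (hgen : GeneratesM A) (hconj : ConjClosed A) (c : G)
    (hfin : (RedA A c).Finite) (r : G → G → Prop) (hlin : IsLinearOrderOn (Ac A c) r)
    (hcomp : CompatibleOrder A c r) (hwc : TotallyWellCovered A c r) (h1 : (1 : G) ∉ A) :
    ∀ n : ℕ, ∀ g : G, leA A g c → lenA A g = n →
      (∃! l : List G, l ∈ RedA A g ∧ l.Chain' r) ∧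
      (∀ a t, (a :: t) ∈ RedA A g → (a :: t).Chain' r →
        ∀ b ∈ A, leA A b g → r a b) := by
  have hacfin := Ac_finite hgen h1 hfin (c := c)
  intro n
  induction n using Nat.strong_induction_on with
  | _ n IH =>
  intro g hgc hlg
  rcases n with _ | m
  · constructor
    · exact unique0 hgen hlg
    · rintro a t ⟨-, -, hlen⟩ -
      rw [hlg] at hlen
      simp at hlen
  -- n = m + 1
  -- Part 1 : every rising factorization starts with an r-minimal atom
  have hmh : ∀ a₁ t, (a₁ :: t) ∈ RedA A g → (a₁ :: t).Chain' r →
      ∀ b ∈ A, leA A b g → r a₁ b := by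
    intro a₁ t hred hchain
    by_contra hcon
    push_neg at hcon
    obtain ⟨b₀, hb₀A, hb₀g, hnr⟩ := hcon
    obtain ⟨ha₁A, ha₁len, ha₁g, htred⟩ := red_cons hgen hred
    have ha₁c : leA A a₁ c := leA_trans hgen ha₁g hgc
    have hFne : (Fset A r a₁ g).Nonempty := by
      rw [Set.nonempty_iff_ne_empty]
      intro hF
      exact hnr ((hwc g hgc a₁ ha₁A ha₁g).mp hF b₀ hb₀A hb₀g)
    obtain ⟨h, ⟨ha₁h, hlenh⟩, hhg, a', ha'A, ha'ne, hra', ha'h, hlenh'⟩ := hFne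
    have hlh2 : lenA A h = 2 := by omega
    have hhc : leA A h c := leA_trans hgen hhg hgc
    have hlb : lenA A (a₁⁻¹ * h) = 1 := by unfold leA at ha₁h; omega
    have hbA : a₁⁻¹ * h ∈ A := mem_of_lenA_one hgen hlb
    have hbg₁ : leA A (a₁⁻¹ * h) (a₁⁻¹ * g) := leA_inner hgen ha₁h hhg
    have hg₁c : leA A (a₁⁻¹ * g) c := leA_quot hgen hconj ha₁g hgc
    have hbc : leA A (a₁⁻¹ * h) c := leA_trans hgen hbg₁ hg₁c
    obtain ⟨-, -, hlencons⟩ := hred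
    cases t with
    | nil =>
      simp only [List.length_cons, List.length_nil] at hlencons
      unfold leA at hhg
      omega
    | cons a₂ t' =>
      have hlg₁ : lenA A (a₁⁻¹ * g) = m := by unfold leA at ha₁g; omega
      obtain ⟨ha₂A, ha₂len, ha₂g₁, -⟩ := red_cons hgen htred
      have ha₂c : leA A a₂ c := leA_trans hgen ha₂g₁ hg₁c
      have hra₂b : r a₂ (a₁⁻¹ * h) :=
        (IH m (by omega) (a₁⁻¹ * g) hg₁c hlg₁).2 a₂ t' htred hchain.tail
          (a₁⁻¹ * h) hbA hbg₁
      have hra₁a₂ : r a₁ a₂ := (List.isChain_cons_cons.mp hchain).1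
      have hra₁b : r a₁ (a₁⁻¹ * h) :=
        hlin.2.2.1 a₁ ⟨ha₁A, ha₁c⟩ a₂ ⟨ha₂A, ha₂c⟩ _ ⟨hbA, hbc⟩ hra₁a₂ hra₂b
      have hl2red : [a₁, a₁⁻¹ * h] ∈ RedA A h := by
        refine ⟨?_, by simp, by simp [hlh2]⟩
        intro x hx
        rcases List.mem_cons.mp hx with rfl | hx
        · exact ha₁A
        · simp at hx; rw [hx]; exact hbA
      have hl2ch : [a₁, a₁⁻¹ * h].Chain' r := List.isChain_cons_cons.mpr ⟨hra₁b, List.isChain_singleton _⟩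
      obtain ⟨m₀, ⟨hm₀A, hm₀h⟩, hm₀min⟩ :=
        set_rmin hlin (S := {x | x ∈ A ∧ leA A x h})
          (hacfin.subset (fun x hx => ⟨hx.1, leA_trans hgen hx.2 hhc⟩))
          (fun x hx => ⟨hx.1, leA_trans hgen hx.2 hhc⟩)
          ⟨a₁, ha₁A, ha₁h⟩
      have hm₀len : lenA A m₀ = 1 := lenA_atom hgen h1 hm₀A
      have hcompl : leA A (m₀⁻¹ * h) h := leA_complement hgen hconj hm₀h
      have hlmh : lenA A (m₀⁻¹ * h) = 1 := by unfold leA at hm₀h; omega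
      have hmhA : m₀⁻¹ * h ∈ A := mem_of_lenA_one hgen hlmh
      have hred2 : [m₀, m₀⁻¹ * h] ∈ RedA A h := by
        refine ⟨?_, by simp, by simp [hlh2]⟩
        intro x hx
        rcases List.mem_cons.mp hx with rfl | hx
        · exact hm₀A
        · simp at hx; rw [hx]; exact hmhA
      have hch2 : [m₀, m₀⁻¹ * h].Chain' r :=
        List.isChain_cons_cons.mpr ⟨hm₀min _ ⟨hmhA, hcompl⟩, List.isChain_singleton _⟩
      obtain ⟨lu, -, huq⟩ := hcomp h hhc hlh2
      have e1 := huq _ ⟨hl2red, hl2ch⟩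
      have e2 := huq _ ⟨hred2, hch2⟩
      rw [← e2] at e1
      have ha₁m₀ : a₁ = m₀ := by injection e1
      have hra₁a' : r a₁ a' := by
        rw [ha₁m₀]
        exact hm₀min a' ⟨ha'A, ha'h⟩
      have : a' = a₁ :=
        hlin.2.1 a' ⟨ha'A, leA_trans hgen ha'h hhc⟩ a₁ ⟨ha₁A, ha₁c⟩ hra' hra₁a'
      exact ha'ne this
  -- Part 2 : existence
  have hex : ∃ l : List G, l ∈ RedA A g ∧ l.Chain' r := by
    obtain ⟨w, hw⟩ := exists_red hgen g
    cases w with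
    | nil =>
      obtain ⟨-, -, hl⟩ := hw
      rw [hlg] at hl
      simp at hl
    | cons a t =>
      obtain ⟨haA, halen, hag, -⟩ := red_cons hgen hw
      obtain ⟨a₀, ⟨ha₀A, ha₀g⟩, hmin⟩ :=
        set_rmin hlin (S := {x | x ∈ A ∧ leA A x g})
          (hacfin.subset (fun x hx => ⟨hx.1, leA_trans hgen hx.2 hgc⟩))
          (fun x hx => ⟨hx.1, leA_trans hgen hx.2 hgc⟩) ⟨a, haA, hag⟩
      have ha₀len : lenA A a₀ = 1 := lenA_atom hgen h1 ha₀A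
      have hg'c : leA A (a₀⁻¹ * g) c := leA_quot hgen hconj ha₀g hgc
      have hlg' : lenA A (a₀⁻¹ * g) = m := by unfold leA at ha₀g; omega
      obtain ⟨l', ⟨hl'red, hl'ch⟩, -⟩ := (IH m (by omega) (a₀⁻¹ * g) hg'c hlg').1
      refine ⟨a₀ :: l', red_cons_build hgen h1 ha₀A ha₀g hl'red, ?_⟩
      cases l' with
      | nil => exact List.isChain_singleton _
      | cons a₂ t₂ =>
        obtain ⟨ha₂A, -, ha₂g', -⟩ := red_cons hgen hl'red
        have hg'g : leA A (a₀⁻¹ * g) g := leA_complement hgen hconj ha₀g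
        have : r a₀ a₂ := hmin a₂ ⟨ha₂A, leA_trans hgen ha₂g' hg'g⟩
        exact List.isChain_cons_cons.mpr ⟨this, hl'ch⟩
  -- Part 3 : uniqueness
  have huniq : ∀ l₁ l₂ : List G, (l₁ ∈ RedA A g ∧ l₁.Chain' r) →
      (l₂ ∈ RedA A g ∧ l₂.Chain' r) → l₁ = l₂ := by
    rintro l₁ l₂ ⟨h₁red, h₁ch⟩ ⟨h₂red, h₂ch⟩
    cases l₁ with
    | nil =>
      obtain ⟨-, -, hl⟩ := h₁red
      rw [hlg] at hl
      simp at hl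
    | cons a t =>
      cases l₂ with
      | nil =>
        obtain ⟨-, -, hl⟩ := h₂red
        rw [hlg] at hl
        simp at hl
      | cons a' s =>
        obtain ⟨haA, halen, hag, htred⟩ := red_cons hgen h₁red
        obtain ⟨ha'A, ha'len, ha'g, hsred⟩ := red_cons hgen h₂red
        have r1 : r a a' := hmh a t h₁red h₁ch a' ha'A ha'g
        have r2 : r a' a := hmh a' s h₂red h₂ch a haA hag
        have haa : a = a' :=
          hlin.2.1 a ⟨haA, leA_trans hgen hag hgc⟩ a'
            ⟨ha'A, leA_trans hgen ha'g hgc⟩ r1 r2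
        subst haa
        have hg₁c : leA A (a⁻¹ * g) c := leA_quot hgen hconj hag hgc
        have hlg₁ : lenA A (a⁻¹ * g) = m := by unfold leA at hag; omega
        obtain ⟨u, hu, huq⟩ := (IH m (by omega) (a⁻¹ * g) hg₁c hlg₁).1
        have e1 := huq t ⟨htred, h₁ch.tail⟩
        have e2 := huq s ⟨hsred, h₂ch.tail⟩
        rw [e1, e2]
  obtain ⟨l₀, hl₀⟩ := hex
  exact ⟨⟨l₀, hl₀, fun y hy => huniq y l₀ hy hl₀⟩, hmh⟩
theorem unique_rising_of_totally_well_covered (A : Set G) (hgen : GeneratesM A)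
    (hconj : ConjClosed A) (c : G) (hfin : (RedA A c).Finite)
    (r : G → G → Prop) (hlin : IsLinearOrderOn (Ac A c) r)
    (hcomp : CompatibleOrder A c r)
    (hwc : TotallyWellCovered A c r) :
    ∀ x y : G, leA A x y → leA A y c →
      ∃! l : List G, l ∈ RedA A (x⁻¹ * y) ∧ l.Chain' r := by
  intro x y hxy hyc
  have hgc : leA A (x⁻¹ * y) c := leA_quot hgen hconj hxy hyc
  by_cases h1 : (1 : G) ∈ A
  · by_cases hc0 : lenA A c = 0
    · have hy0 : lenA A y = 0 := by unfold leA at hyc; omega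
      have hg0 : lenA A (x⁻¹ * y) = 0 := by unfold leA at hxy; omega
      exact unique0 hgen hg0
    · exact absurd (no_one hgen hlin hwc h1 hc0) (by simp)
  · exact (master A hgen hconj c hfin r hlin hcomp hwc h1 (lenA A (x⁻¹ * y))
      (x⁻¹ * y) hgc rfl).1
end
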